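/- For the spin-1 AKLT transfer operator 𝔼 on M_2(ℂ) defined by 𝔼(B) = (4/3)(S^X B S^X + S^Y B S^Y + S^Z B S^Z), the n-th power satisfies 𝔼^n(B) = Tr(B)·(1/2)·1 + 2(-1)^n 3^{-n} ∑_{U∈{X,Y,Z}} ⟨S^U, B⟩ S^U (with ⟨A,B⟩ = 2Tr(A*B)), and hence ‖𝔼^n - |1⟩⟨ρ|‖ = 3^{-n} in the operator norm induced by the Hilbert–Schmidt structure. -/
import Mathlib

open Matrix

/-- Hilbert–Schmidt norm of a matrix. -/
noncomputable def hsNorm {m : Type*} [Fintype m]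
    (X : Matrix m m ℂ) : ℝ := Real.sqrt ((Xᴴ * X).trace.re)

/-- Auxiliary closed form for the iterates. -/
noncomputable def Fm (n : ℕ) (B : Matrix (Fin 2) (Fin 2) ℂ) : Matrix (Fin 2) (Fin 2) ℂ :=
  !![(B 0 0 + B 1 1)/2 + ((-1)^n/3^n : ℂ) * (B 0 0 - B 1 1)/2, ((-1)^n/3^n : ℂ) * B 0 1;
     ((-1)^n/3^n : ℂ) * B 1 0, (B 0 0 + B 1 1)/2 - ((-1)^n/3^n : ℂ) * (B 0 0 - B 1 1)/2]

lemma hsq (X : Matrix (Fin 2) (Fin 2) ℂ) :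
    ((Xᴴ * X).trace).re = Complex.normSq (X 0 0) + Complex.normSq (X 0 1)
      + Complex.normSq (X 1 0) + Complex.normSq (X 1 1) := by
  simp [Matrix.trace_fin_two, Matrix.mul_apply, Fin.sum_univ_two, Matrix.conjTranspose_apply,
    Complex.normSq_apply, Complex.mul_re, Complex.add_re]
  ring

set_option maxHeartbeats 2000000 in
theorem stmt13 (n : ℕ) (SX SY SZ : Matrix (Fin 2) (Fin 2) ℂ)
    (hSX : SX = (1/2 : ℂ) • !![0, 1; 1, 0])
    (hSY : SY = (1/2 : ℂ) • !![0, -Complex.I; Complex.I, 0])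
    (hSZ : SZ = (1/2 : ℂ) • !![1, 0; 0, -1])
    (E : Matrix (Fin 2) (Fin 2) ℂ → Matrix (Fin 2) (Fin 2) ℂ)
    (hE : ∀ B, E B = (4/3 : ℂ) • (SX * B * SX + SY * B * SY + SZ * B * SZ)) :
    (∀ B, E^[n] B = B.trace • ((1/2 : ℂ) • 1) +
        (2 * (-1) ^ n / 3 ^ n : ℂ) •
          ((SXᴴ * B).trace • SX + (SYᴴ * B).trace • SY + (SZᴴ * B).trace • SZ)) ∧
      (∀ B, hsNorm (E^[n] B - B.trace • ((1/2 : ℂ) • 1)) ≤ (1 / 3 ^ n : ℝ) * hsNorm B) ∧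
      (∃ B : Matrix (Fin 2) (Fin 2) ℂ, B ≠ 0 ∧
        hsNorm (E^[n] B - B.trace • ((1/2 : ℂ) • 1)) = (1 / 3 ^ n : ℝ) * hsNorm B) := by
  subst hSX hSY hSZ
  -- closed form of iterates
  have key : ∀ B, E^[n] B = Fm n B := by
    induction n with
    | zero =>
      intro B
      ext i j
      fin_cases i <;> fin_cases j <;> simp [Fm] <;> ring
    | succ m ih =>
      intro B
      rw [Function.iterate_succ_apply', ih B, hE]
      ext i j
      fin_cases i <;> fin_cases j <;>
        simp [Fm, Matrix.mul_apply, Fin.sum_univ_two, pow_succ] <;> ring_nf <;>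
          simp [Complex.I_sq] <;> ring
  -- closed form equals the stated RHS
  have keq : ∀ B : Matrix (Fin 2) (Fin 2) ℂ, Fm n B = B.trace • ((1/2 : ℂ) • 1) +
      (2 * (-1) ^ n / 3 ^ n : ℂ) •
        ((((1/2 : ℂ) • !![0, 1; 1, 0])ᴴ * B).trace • ((1/2 : ℂ) • !![0, 1; 1, 0]) +
         (((1/2 : ℂ) • !![0, -Complex.I; Complex.I, 0])ᴴ * B).trace •
            ((1/2 : ℂ) • !![0, -Complex.I; Complex.I, 0]) +
         (((1/2 : ℂ) • !![1, 0; 0, -1])ᴴ * B).trace • ((1/2 : ℂ) • !![1, 0; 0, -1])) := by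
    intro B
    ext i j
    fin_cases i <;> fin_cases j <;>
      simp [Fm, Matrix.trace_fin_two, Matrix.mul_apply, Fin.sum_univ_two, Matrix.one_apply,
        Matrix.conjTranspose_apply] <;> ring_nf <;> simp [Complex.I_sq, Complex.conj_ofNat] <;> ring
  -- difference matrix
  have hD : ∀ B : Matrix (Fin 2) (Fin 2) ℂ,
      E^[n] B - B.trace • ((1/2 : ℂ) • 1) =
        ((((-1)^n/3^n : ℝ) : ℂ)) •
          !![(B 0 0 - B 1 1)/2, B 0 1; B 1 0, -((B 0 0 - B 1 1)/2)] := by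
    intro B
    rw [key B]
    ext i j
    fin_cases i <;> fin_cases j <;>
      simp [Fm, Matrix.trace_fin_two, Matrix.one_apply] <;> push_cast <;> ring
  have hμ2 : (((-1:ℝ)^n/3^n))^2 = (1/3^n : ℝ)^2 := by
    rw [div_pow, div_pow, ← pow_mul, ← pow_mul, mul_comm, pow_mul, pow_mul]
    norm_num
  have h3pos : (0:ℝ) < (1/3^n : ℝ) := by positivity
  refine ⟨fun B => by rw [key B, keq B], ?_, ?_⟩
  · intro B
    rw [hD B, hsNorm, hsNorm, hsq, hsq]
    simp only [Matrix.smul_apply, smul_eq_mul, Matrix.cons_val', Matrix.cons_val_zero,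
      Matrix.cons_val_one, Matrix.head_cons, Matrix.head_fin_const, Matrix.empty_val',
      Matrix.cons_val_fin_one, Matrix.of_apply, _root_.map_mul, Complex.normSq_ofReal,
      Complex.normSq_neg]
    have hsub : Complex.normSq (B 0 0 - B 1 1) ≤
        2 * (Complex.normSq (B 0 0) + Complex.normSq (B 1 1)) := by
      have h1 := Complex.normSq_nonneg (B 0 0 + B 1 1)
      have h2 := Complex.normSq_add (B 0 0) (B 1 1)
      have h3 := Complex.normSq_sub (B 0 0) (B 1 1)
      linarith
    have hdiv : Complex.normSq ((B 0 0 - B 1 1)/2) = Complex.normSq (B 0 0 - B 1 1) / 4 := by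
      rw [map_div₀]
      norm_num [Complex.normSq_apply]
    rw [hdiv]
    have hq : (-1:ℝ)^n/3^n * ((-1:ℝ)^n/3^n) = (1/3^n:ℝ)^2 := by rw [← hμ2]; ring
    rw [hq]
    have hs : (1/3^n:ℝ)^2 * (Complex.normSq (B 0 0 - B 1 1) / 4)
        + (1/3^n:ℝ)^2 * Complex.normSq (B 0 1)
        + (1/3^n:ℝ)^2 * Complex.normSq (B 1 0)
        + (1/3^n:ℝ)^2 * (Complex.normSq (B 0 0 - B 1 1) / 4)
        ≤ (1/3^n : ℝ)^2 * (Complex.normSq (B 0 0) + Complex.normSq (B 0 1)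
            + Complex.normSq (B 1 0) + Complex.normSq (B 1 1)) := by
      nlinarith [sq_nonneg (1/3^n:ℝ), Complex.normSq_nonneg (B 0 1),
        Complex.normSq_nonneg (B 1 0)]
    calc Real.sqrt _ ≤ Real.sqrt ((1/3^n : ℝ)^2 * (Complex.normSq (B 0 0)
          + Complex.normSq (B 0 1) + Complex.normSq (B 1 0) + Complex.normSq (B 1 1))) := by
          apply Real.sqrt_le_sqrt
          exact hs
      _ = (1/3^n : ℝ) * Real.sqrt (Complex.normSq (B 0 0) + Complex.normSq (B 0 1)
          + Complex.normSq (B 1 0) + Complex.normSq (B 1 1)) := by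
          rw [Real.sqrt_mul (sq_nonneg _), Real.sqrt_sq h3pos.le]
  · refine ⟨(1/2 : ℂ) • !![0, 1; 1, 0], ?_, ?_⟩
    · intro h
      have := congrFun (congrFun h 0) 1
      simp [Matrix.smul_apply] at this
    · rw [hD, hsNorm, hsNorm, hsq, hsq]
      simp only [Matrix.smul_apply, smul_eq_mul, Matrix.cons_val', Matrix.cons_val_zero,
        Matrix.cons_val_one, Matrix.head_cons, Matrix.head_fin_const, Matrix.empty_val',
        Matrix.cons_val_fin_one, Matrix.of_apply, _root_.map_mul, Complex.normSq_ofReal,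
        Complex.normSq_neg, mul_zero, mul_one, zero_mul, one_mul]
      have hA : Complex.normSq (((0:ℂ) - 0)/2) = 0 := by norm_num
      have hB : Complex.normSq ((1:ℂ)/2) = 1/4 := by norm_num [Complex.normSq_apply]
      have hC : Complex.normSq (0:ℂ) = 0 := map_zero _
      have hq : (-1:ℝ)^n/3^n * ((-1:ℝ)^n/3^n) = (1/3^n:ℝ)^2 := by rw [← hμ2]; ring
      rw [hA, hB, hC, hq]
      rw [show (1/3^n:ℝ)^2 * 0 + (1/3^n:ℝ)^2 * (1/4) + (1/3^n:ℝ)^2 * (1/4)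
          + (1/3^n:ℝ)^2 * 0 = (1/3^n:ℝ)^2 * (0 + 1/4 + 1/4 + 0) from by ring]
      rw [Real.sqrt_mul (sq_nonneg _), Real.sqrt_sq h3pos.le]
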